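/- arXiv:2604.13043 — 6 statements merged into one kernel-verified Lean document; each statement's English description precedes it below -/
import Mathlib

section
/- If β ≥ β_K := (1−η)^{α−1}/Γ(α), then K(t,s) ≥ 0 for all (t,s) ∈ [0,1]×[0,1]. -/
open Set MeasureTheory

/-- The Green's function `K(t,s) = β + ((η−s)^{α−1}/Γ(α))·χ_{[0,η]}(s) −
((t−s)^{α−1}/Γ(α))·χ_{[0,t]}(s)`. -/
noncomputable def Kker (α η β t s : ℝ) : ℝ :=
  β + (Set.Icc (0:ℝ) η).indicator (fun x => (η - x) ^ (α - 1) / Real.Gamma α) s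
    - (Set.Icc (0:ℝ) t).indicator (fun x => (t - x) ^ (α - 1) / Real.Gamma α) s

/-- The function `γ(t) = β/Γ(3−α) + η − t`. -/
noncomputable def gam (α η β t : ℝ) : ℝ := β / Real.Gamma (3 - α) + η - t

lemma rpow_subadd {a b p : ℝ} (ha : 0 ≤ a) (hb : 0 ≤ b) (hp : 0 ≤ p) (hp1 : p ≤ 1) :
    (a + b) ^ p ≤ a ^ p + b ^ p := by
  have h := NNReal.coe_le_coe.2 (NNReal.rpow_add_le_add_rpow a.toNNReal b.toNNReal hp hp1)
  push_cast [Real.coe_toNNReal _ ha, Real.coe_toNNReal _ hb] at h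
  exact h

/-- if `β ≥ β_K := (1−η)^{α−1}/Γ(α)` then `K ≥ 0` on `[0,1]×[0,1]`. -/
theorem stmt_1 (α η β : ℝ) (hα1 : 1 < α) (hα2 : α ≤ 2) (hη0 : 0 < η) (hη1 : η < 1)
    (hβ : 0 < β) (hβK : (1 - η) ^ (α - 1) / Real.Gamma α ≤ β) :
    ∀ t ∈ Set.Icc (0:ℝ) 1, ∀ s ∈ Set.Icc (0:ℝ) 1, 0 ≤ Kker α η β t s := by
  intro t ht s hs
  obtain ⟨ht0, ht1⟩ := ht
  obtain ⟨hs0, hs1⟩ := hs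
  have hG : 0 < Real.Gamma α := Real.Gamma_pos_of_pos (by linarith)
  have hp0 : (0:ℝ) ≤ α - 1 := by linarith
  have hp1 : α - 1 ≤ 1 := by linarith
  unfold Kker
  by_cases hst : s ≤ t
  · rw [Set.indicator_of_mem (Set.mem_Icc.mpr ⟨hs0, hst⟩)]
    by_cases hsη : s ≤ η
    · rw [Set.indicator_of_mem (Set.mem_Icc.mpr ⟨hs0, hsη⟩)]
      by_cases htη : t ≤ η
      · have h1 : (t - s) ^ (α - 1) ≤ (η - s) ^ (α - 1) :=
          Real.rpow_le_rpow (by linarith) (by linarith) hp0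
        have : (t - s) ^ (α - 1) / Real.Gamma α ≤ (η - s) ^ (α - 1) / Real.Gamma α :=
          div_le_div_of_nonneg_right h1 hG.le
        linarith
      · push_neg at htη
        have h1 : (t - s) ^ (α - 1) ≤ (η - s) ^ (α - 1) + (t - η) ^ (α - 1) := by
          have := rpow_subadd (a := η - s) (b := t - η) (by linarith) (by linarith) hp0 hp1
          convert this using 2
          ring
        have h2 : (t - η) ^ (α - 1) ≤ (1 - η) ^ (α - 1) :=
          Real.rpow_le_rpow (by linarith) (by linarith) hp0
        have h3 : (t - s) ^ (α - 1) / Real.Gamma α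
            ≤ (η - s) ^ (α - 1) / Real.Gamma α + (1 - η) ^ (α - 1) / Real.Gamma α := by
          rw [← add_div]
          exact div_le_div_of_nonneg_right (by linarith) hG.le
        linarith
    · push_neg at hsη
      rw [Set.indicator_of_notMem (show s ∉ Set.Icc (0:ℝ) η by rw [Set.mem_Icc]; intro h; linarith [h.2])]
      have h1 : (t - s) ^ (α - 1) ≤ (1 - η) ^ (α - 1) :=
        Real.rpow_le_rpow (by linarith) (by linarith) hp0
      have : (t - s) ^ (α - 1) / Real.Gamma α ≤ (1 - η) ^ (α - 1) / Real.Gamma α :=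
        div_le_div_of_nonneg_right h1 hG.le
      linarith
  · push_neg at hst
    rw [Set.indicator_of_notMem (show s ∉ Set.Icc (0:ℝ) t by rw [Set.mem_Icc]; intro h; linarith [h.2])]
    have : 0 ≤ (Set.Icc (0:ℝ) η).indicator (fun x => (η - x) ^ (α - 1) / Real.Gamma α) s := by
      apply Set.indicator_nonneg
      intro x hx
      have hx2 := (Set.mem_Icc.mp hx).2
      have : (0:ℝ) ≤ (η - x) ^ (α - 1) := Real.rpow_nonneg (by linarith) _
      positivity
    linarith
end

section
/- Suppose β > β_K := (1−η)^{α−1}/Γ(α). Then with Φ(s) = β + η^{α−1}/Γ(α) and c_{1,K} = (βΓ(α) − (1−η)^{α−1})/(βΓ(α) + η^{α−1}) ∈ (0,1], one has 0 < K(t,s) ≤ Φ(s) for all t,s ∈ [0,1] and K(t,s) ≥ c_{1,K}·Φ(s) for all t ∈ [0,1] and s ∈ [0,1]. -/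
open Set MeasureTheory NNReal

lemma my_rpow_add_le (x y p : ℝ) (hx : 0 ≤ x) (hy : 0 ≤ y) (hp : 0 ≤ p) (hp1 : p ≤ 1) :
    (x + y) ^ p ≤ x ^ p + y ^ p := by
  have h := NNReal.rpow_add_le_add_rpow x.toNNReal y.toNNReal hp hp1
  have hxy : ((x.toNNReal + y.toNNReal : ℝ≥0) : ℝ) = x + y := by
    simp [Real.coe_toNNReal _ hx, Real.coe_toNNReal _ hy]
  calc (x + y) ^ p = ((x.toNNReal + y.toNNReal : ℝ≥0) : ℝ) ^ p := by rw [hxy]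
    _ = (((x.toNNReal + y.toNNReal) ^ p : ℝ≥0) : ℝ) := by rw [NNReal.coe_rpow]
    _ ≤ ((x.toNNReal ^ p + y.toNNReal ^ p : ℝ≥0) : ℝ) := by exact_mod_cast h
    _ = x ^ p + y ^ p := by
        simp [NNReal.coe_rpow, Real.coe_toNNReal _ hx, Real.coe_toNNReal _ hy]

/-- if `β > β_K` then with `Φ(s) = β + η^{α−1}/Γ(α)` and
`c_{1,K} = (βΓ(α) − (1−η)^{α−1})/(βΓ(α) + η^{α−1}) ∈ (0,1]`, one has
`0 < K(t,s) ≤ Φ(s)` and `K(t,s) ≥ c_{1,K}·Φ(s)` for all `t, s ∈ [0,1]`. -/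
theorem stmt_6 (α η β : ℝ) (hα1 : 1 < α) (hα2 : α ≤ 2) (hη0 : 0 < η) (hη1 : η < 1)
    (hβ : 0 < β) (hβK : (1 - η) ^ (α - 1) / Real.Gamma α < β)
    (Φ : ℝ → ℝ) (hΦ : ∀ s, Φ s = β + η ^ (α - 1) / Real.Gamma α)
    (c : ℝ)
    (hc : c = (β * Real.Gamma α - (1 - η) ^ (α - 1)) / (β * Real.Gamma α + η ^ (α - 1))) :
    c ∈ Set.Ioc (0:ℝ) 1 ∧
    ∀ t ∈ Set.Icc (0:ℝ) 1, ∀ s ∈ Set.Icc (0:ℝ) 1,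
      0 < Kker α η β t s ∧ Kker α η β t s ≤ Φ s ∧ c * Φ s ≤ Kker α η β t s := by
  have hG : 0 < Real.Gamma α := Real.Gamma_pos_of_pos (by linarith)
  have hp0 : (0:ℝ) ≤ α - 1 := by linarith
  have hp1 : α - 1 ≤ 1 := by linarith
  have h1η : (0:ℝ) ≤ (1 - η) ^ (α - 1) := Real.rpow_nonneg (by linarith) _
  have hηp : (0:ℝ) ≤ η ^ (α - 1) := Real.rpow_nonneg hη0.le _
  have hβG : (1 - η) ^ (α - 1) < β * Real.Gamma α := by
    rw [div_lt_iff₀ hG] at hβK; linarith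
  have hden : 0 < β * Real.Gamma α + η ^ (α - 1) := by positivity
  refine ⟨⟨by rw [hc]; exact div_pos (by linarith) hden,
    by rw [hc, div_le_one hden]; linarith⟩, ?_⟩
  intro t ht s hs
  obtain ⟨ht0, ht1⟩ := ht
  obtain ⟨hs0, hs1⟩ := hs
  set A := (Set.Icc (0:ℝ) η).indicator (fun x => (η - x) ^ (α - 1) / Real.Gamma α) s with hA
  set B := (Set.Icc (0:ℝ) t).indicator (fun x => (t - x) ^ (α - 1) / Real.Gamma α) s with hB
  have hK : Kker α η β t s = β + A - B := rfl
  have hA0 : 0 ≤ A := by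
    apply Set.indicator_nonneg
    intro x hx
    exact div_nonneg (Real.rpow_nonneg (by linarith [hx.2]) _) hG.le
  have hB0 : 0 ≤ B := by
    apply Set.indicator_nonneg
    intro x hx
    exact div_nonneg (Real.rpow_nonneg (by linarith [hx.2]) _) hG.le
  have hAub : A ≤ η ^ (α - 1) / Real.Gamma α := by
    rw [hA]
    apply Set.indicator_le' (fun x hx => ?_) (fun x _ => div_nonneg hηp hG.le)
    have : (η - x) ^ (α - 1) ≤ η ^ (α - 1) :=
      Real.rpow_le_rpow (by linarith [hx.2]) (by linarith [hx.1]) hp0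
    exact div_le_div_of_nonneg_right this hG.le
  have hBA : B - A ≤ (1 - η) ^ (α - 1) / Real.Gamma α := by
    by_cases hst : s ≤ t
    · have hBval : B = (t - s) ^ (α - 1) / Real.Gamma α := by
        rw [hB, Set.indicator_of_mem (Set.mem_Icc.mpr ⟨hs0, hst⟩)]
      by_cases hsη : s ≤ η
      · have hAval : A = (η - s) ^ (α - 1) / Real.Gamma α := by
          rw [hA, Set.indicator_of_mem (Set.mem_Icc.mpr ⟨hs0, hsη⟩)]
        rw [hBval, hAval, div_sub_div_same, div_le_div_iff_of_pos_right hG]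
        by_cases htη : t ≤ η
        · have : (t - s) ^ (α - 1) ≤ (η - s) ^ (α - 1) :=
            Real.rpow_le_rpow (by linarith) (by linarith) hp0
          linarith
        · push_neg at htη
          have hsplit : (t - s) ^ (α - 1) ≤ (η - s) ^ (α - 1) + (t - η) ^ (α - 1) := by
            have := my_rpow_add_le (η - s) (t - η) (α - 1) (by linarith) (by linarith) hp0 hp1
            have he : η - s + (t - η) = t - s := by ring
            rwa [he] at this
          have h2 : (t - η) ^ (α - 1) ≤ (1 - η) ^ (α - 1) :=
            Real.rpow_le_rpow (by linarith) (by linarith) hp0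
          linarith
      · push_neg at hsη
        have hAval : A = 0 := by
          rw [hA, Set.indicator_of_notMem (fun h => absurd (Set.mem_Icc.mp h).2 (not_le.mpr hsη))]
        have h2 : (t - s) ^ (α - 1) ≤ (1 - η) ^ (α - 1) :=
          Real.rpow_le_rpow (by linarith) (by linarith) hp0
        rw [hBval, hAval, sub_zero]
        exact div_le_div_of_nonneg_right h2 hG.le
    · have hBval : B = 0 := by
        rw [hB, Set.indicator_of_notMem (fun h => absurd (Set.mem_Icc.mp h).2 hst)]
      rw [hBval]
      have : 0 ≤ (1 - η) ^ (α - 1) / Real.Gamma α := div_nonneg h1η hG.le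
      linarith
  have hcΦ : c * Φ s = β - (1 - η) ^ (α - 1) / Real.Gamma α := by
    rw [hc, hΦ]
    field_simp
  refine ⟨?_, ?_, ?_⟩
  · rw [hK]; linarith
  · rw [hK, hΦ]; linarith
  · rw [hK, hcΦ]; linarith
end

section
/- Suppose β = β_K := (1−η)^{α−1}/Γ(α) and fix b ∈ [η,1). Then with Φ(s) = β + η^{α−1}/Γ(α) and c_{2,K} = (βΓ(α) − (b−η)^{α−1})/(βΓ(α) + η^{α−1}) ∈ (0,1], one has 0 ≤ K(t,s) ≤ Φ(s) for all t,s ∈ [0,1] and K(t,s) ≥ c_{2,K}·Φ(s) for all t ∈ [0,b] and s ∈ [0,1]. -/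
open Set MeasureTheory

private lemma rpow_subadd_s7 {x y p : ℝ} (hx : 0 ≤ x) (hy : 0 ≤ y) (hp0 : 0 ≤ p) (hp1 : p ≤ 1) :
    (x + y) ^ p ≤ x ^ p + y ^ p := by
  have h := NNReal.rpow_add_le_add_rpow (Real.toNNReal x) (Real.toNNReal y) hp0 hp1
  have h2 := NNReal.coe_le_coe.2 h
  push_cast at h2
  rwa [Real.coe_toNNReal x hx, Real.coe_toNNReal y hy] at h2

private lemma rpow_sub_le {x y p : ℝ} (hx : 0 ≤ x) (hxy : x ≤ y) (hp0 : 0 ≤ p) (hp1 : p ≤ 1) :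
    y ^ p - x ^ p ≤ (y - x) ^ p := by
  have h := rpow_subadd_s7 hx (sub_nonneg.2 hxy) hp0 hp1
  rw [add_sub_cancel] at h
  linarith

/-- Core estimate: the difference of the two indicator terms is at most `(T-η)^(α-1)`. -/
private lemma core_est (α η : ℝ) (hα1 : 1 < α) (hα2 : α ≤ 2) (hη0 : 0 < η)
    (t T s : ℝ) (htT : t ≤ T) (hηT : η ≤ T) :
    (Set.Icc (0:ℝ) t).indicator (fun x => (t - x) ^ (α - 1)) s
      - (Set.Icc (0:ℝ) η).indicator (fun x => (η - x) ^ (α - 1)) s ≤ (T - η) ^ (α - 1) := by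
  have hp0 : (0:ℝ) ≤ α - 1 := by linarith
  have hp1 : α - 1 ≤ 1 := by linarith
  have hT0 : 0 ≤ (T - η) ^ (α - 1) := Real.rpow_nonneg (by linarith) _
  by_cases hst : s ∈ Set.Icc (0:ℝ) t
  · rw [Set.indicator_of_mem hst]
    obtain ⟨hs0, hst'⟩ := hst
    by_cases hsη : s ∈ Set.Icc (0:ℝ) η
    · rw [Set.indicator_of_mem hsη]
      obtain ⟨_, hsη'⟩ := hsη
      by_cases htη : t ≤ η
      · have : (t - s) ^ (α - 1) ≤ (η - s) ^ (α - 1) :=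
          Real.rpow_le_rpow (by linarith) (by linarith) hp0
        linarith
      · push_neg at htη
        have h1 : (t - s) ^ (α - 1) - (η - s) ^ (α - 1) ≤ (t - s - (η - s)) ^ (α - 1) :=
          rpow_sub_le (by linarith) (by linarith) hp0 hp1
        have h2 : (t - s - (η - s)) ^ (α - 1) ≤ (T - η) ^ (α - 1) :=
          Real.rpow_le_rpow (by linarith) (by linarith) hp0
        linarith
    · rw [Set.indicator_of_notMem hsη]
      have hsη' : η < s := by
        simp only [Set.mem_Icc, not_and, not_le] at hsη
        exact hsη hs0
      have : (t - s) ^ (α - 1) ≤ (T - η) ^ (α - 1) :=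
        Real.rpow_le_rpow (by linarith) (by linarith) hp0
      linarith
  · rw [Set.indicator_of_notMem hst]
    have h0 : 0 ≤ (Set.Icc (0:ℝ) η).indicator (fun x => (η - x) ^ (α - 1)) s := by
      apply Set.indicator_nonneg
      intro x hx
      exact Real.rpow_nonneg (by linarith [hx.2]) _
    linarith

/-- if `β = β_K` and `b ∈ [η,1)`, then with `Φ(s) = β + η^{α−1}/Γ(α)` and
`c_{2,K} = (βΓ(α) − (b−η)^{α−1})/(βΓ(α) + η^{α−1}) ∈ (0,1]`, one has
`0 ≤ K(t,s) ≤ Φ(s)` for all `t, s ∈ [0,1]` and `K(t,s) ≥ c_{2,K}·Φ(s)` for all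
`t ∈ [0,b]`, `s ∈ [0,1]`. -/
theorem stmt_7 (α η β : ℝ) (hα1 : 1 < α) (hα2 : α ≤ 2) (hη0 : 0 < η) (hη1 : η < 1)
    (hβ : 0 < β) (hβK : β = (1 - η) ^ (α - 1) / Real.Gamma α)
    (b : ℝ) (hbl : η ≤ b) (hbu : b < 1)
    (Φ : ℝ → ℝ) (hΦ : ∀ s, Φ s = β + η ^ (α - 1) / Real.Gamma α)
    (c : ℝ)
    (hc : c = (β * Real.Gamma α - (b - η) ^ (α - 1)) / (β * Real.Gamma α + η ^ (α - 1))) :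
    c ∈ Set.Ioc (0:ℝ) 1 ∧
    (∀ t ∈ Set.Icc (0:ℝ) 1, ∀ s ∈ Set.Icc (0:ℝ) 1,
      0 ≤ Kker α η β t s ∧ Kker α η β t s ≤ Φ s) ∧
    (∀ t ∈ Set.Icc (0:ℝ) b, ∀ s ∈ Set.Icc (0:ℝ) 1, c * Φ s ≤ Kker α η β t s) := by
  have hΓ : 0 < Real.Gamma α := Real.Gamma_pos_of_pos (by linarith)
  have hp0 : (0:ℝ) ≤ α - 1 := by linarith
  have hp1 : α - 1 ≤ 1 := by linarith
  have hβΓ : β * Real.Gamma α = (1 - η) ^ (α - 1) := by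
    rw [hβK]; field_simp
  have hη_pow_pos : 0 < η ^ (α - 1) := Real.rpow_pos_of_pos hη0 _
  have hb_pow_nonneg : 0 ≤ (b - η) ^ (α - 1) := Real.rpow_nonneg (by linarith) _
  have hnum_pos : 0 < β * Real.Gamma α - (b - η) ^ (α - 1) := by
    rw [hβΓ]
    have : (b - η) ^ (α - 1) < (1 - η) ^ (α - 1) :=
      Real.rpow_lt_rpow (by linarith) (by linarith) (by linarith)
    linarith
  have hden_pos : 0 < β * Real.Gamma α + η ^ (α - 1) := by positivity
  -- rewrite indicator-with-division as indicator divided by Γ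
  have hind : ∀ (r s : ℝ),
      (Set.Icc (0:ℝ) r).indicator (fun x => (r - x) ^ (α - 1) / Real.Gamma α) s
        = (Set.Icc (0:ℝ) r).indicator (fun x => (r - x) ^ (α - 1)) s / Real.Gamma α := by
    intro r s
    by_cases h : s ∈ Set.Icc (0:ℝ) r
    · rw [Set.indicator_of_mem h, Set.indicator_of_mem h]
    · rw [Set.indicator_of_notMem h, Set.indicator_of_notMem h, zero_div]
  have hKker : ∀ t s : ℝ, Kker α η β t s
      = β + ((Set.Icc (0:ℝ) η).indicator (fun x => (η - x) ^ (α - 1)) s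
          - (Set.Icc (0:ℝ) t).indicator (fun x => (t - x) ^ (α - 1)) s) / Real.Gamma α := by
    intro t s
    rw [Kker, hind, hind]
    ring
  have hind_nonneg : ∀ (r s : ℝ), 0 ≤ r →
      0 ≤ (Set.Icc (0:ℝ) r).indicator (fun x => (r - x) ^ (α - 1)) s := by
    intro r s _
    apply Set.indicator_nonneg
    intro x hx
    exact Real.rpow_nonneg (by linarith [hx.2]) _
  refine ⟨⟨by rw [hc]; positivity, by
      rw [hc, div_le_one hden_pos]; linarith⟩, ?_, ?_⟩
  · intro t ht s hs
    obtain ⟨ht0, ht1⟩ := ht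
    constructor
    · rw [hKker]
      have hcore := core_est α η hα1 hα2 hη0 t 1 s ht1 (le_of_lt hη1)
      have h2 : -((1 - η) ^ (α - 1)) / Real.Gamma α
          ≤ ((Set.Icc (0:ℝ) η).indicator (fun x => (η - x) ^ (α - 1)) s
            - (Set.Icc (0:ℝ) t).indicator (fun x => (t - x) ^ (α - 1)) s) / Real.Gamma α := by
        gcongr
        linarith
      have h3 : -((1 - η) ^ (α - 1)) / Real.Gamma α
          = -((1 - η) ^ (α - 1) / Real.Gamma α) := by ring
      rw [hβK]
      linarith
    · rw [hKker, hΦ]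
      have h1 : (Set.Icc (0:ℝ) η).indicator (fun x => (η - x) ^ (α - 1)) s ≤ η ^ (α - 1) := by
        by_cases h : s ∈ Set.Icc (0:ℝ) η
        · rw [Set.indicator_of_mem h]
          exact Real.rpow_le_rpow (by linarith [h.2]) (by linarith [h.1]) hp0
        · rw [Set.indicator_of_notMem h]; positivity
      have h2 := hind_nonneg t s ht0
      have h3 : ((Set.Icc (0:ℝ) η).indicator (fun x => (η - x) ^ (α - 1)) s
          - (Set.Icc (0:ℝ) t).indicator (fun x => (t - x) ^ (α - 1)) s) / Real.Gamma α
          ≤ η ^ (α - 1) / Real.Gamma α := by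
        gcongr
        linarith
      linarith
  · intro t ht s hs
    obtain ⟨ht0, htb⟩ := ht
    rw [hKker, hΦ]
    have hcore := core_est α η hα1 hα2 hη0 t b s htb hbl
    have hΦval : β + η ^ (α - 1) / Real.Gamma α
        = (β * Real.Gamma α + η ^ (α - 1)) / Real.Gamma α := by field_simp
    have hcΦ : c * (β + η ^ (α - 1) / Real.Gamma α)
        = (β * Real.Gamma α - (b - η) ^ (α - 1)) / Real.Gamma α := by
      rw [hΦval, hc]
      field_simp
    rw [hcΦ]
    have : -((b - η) ^ (α - 1)) / Real.Gamma α
        ≤ ((Set.Icc (0:ℝ) η).indicator (fun x => (η - x) ^ (α - 1)) s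
          - (Set.Icc (0:ℝ) t).indicator (fun x => (t - x) ^ (α - 1)) s) / Real.Gamma α := by
      gcongr
      linarith
    have hsplit : (β * Real.Gamma α - (b - η) ^ (α - 1)) / Real.Gamma α
        = β + -((b - η) ^ (α - 1)) / Real.Gamma α := by field_simp; ring
    linarith
end

section
/- (Cone invariance, Case 1) Suppose β > max{β_K, β_γ} and let ρ > 0. Set σ₁ = min{σ_{1,γ}, c_{1,K}, 1}, where c_{1,K} = (βΓ(α) − (1−η)^{α−1})/(βΓ(α) + η^{α−1}) and σ_{1,γ} = (β + (η−1)Γ(3−α))/(β + ηΓ(3−α)), and let P_{σ₁} = {u ∈ C([0,1],ℝ) : min_{t∈[0,1]} u(t) ≥ σ₁·‖u‖_∞}. Then for every u ∈ P_{σ₁} with ‖u‖_∞ ≤ ρ, the function T(u) belongs to P_{σ₁}. -/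
open Set MeasureTheory

/-- `C([0,1],ℝ)` with the supremum norm. -/
abbrev CI := ContinuousMap (Set.Icc (0:ℝ) 1) ℝ

lemma rpow_add_le_add_rpow_real {a b p : ℝ} (ha : 0 ≤ a) (hb : 0 ≤ b)
    (hp0 : 0 ≤ p) (hp1 : p ≤ 1) : (a + b) ^ p ≤ a ^ p + b ^ p := by
  have h := NNReal.rpow_add_le_add_rpow a.toNNReal b.toNNReal hp0 hp1
  have h2 := NNReal.coe_le_coe.2 h
  push_cast at h2
  rwa [Real.coe_toNNReal a ha, Real.coe_toNNReal b hb] at h2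

lemma Kker_bounds {α η β t : ℝ} (s : ℝ) (hα1 : 1 < α) (hα2 : α ≤ 2) (hη0 : 0 < η) (hη1 : η < 1)
    (ht0 : 0 ≤ t) (ht1 : t ≤ 1) :
    β - (1 - η) ^ (α - 1) / Real.Gamma α ≤ Kker α η β t s ∧
      Kker α η β t s ≤ β + η ^ (α - 1) / Real.Gamma α := by
  have hΓ : 0 < Real.Gamma α := Real.Gamma_pos_of_pos (by linarith)
  have hp0 : (0:ℝ) ≤ α - 1 := by linarith
  set A := (Set.Icc (0:ℝ) η).indicator (fun x => (η - x) ^ (α - 1) / Real.Gamma α) s with hA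
  set B := (Set.Icc (0:ℝ) t).indicator (fun x => (t - x) ^ (α - 1) / Real.Gamma α) s with hB
  have hA0 : 0 ≤ A := by
    apply Set.indicator_nonneg
    intro x hx
    exact div_nonneg (Real.rpow_nonneg (by linarith [hx.2]) _) hΓ.le
  have hB0 : 0 ≤ B := by
    apply Set.indicator_nonneg
    intro x hx
    exact div_nonneg (Real.rpow_nonneg (by linarith [hx.2]) _) hΓ.le
  have hAub : A ≤ η ^ (α - 1) / Real.Gamma α := by
    rw [hA]
    by_cases hs : s ∈ Set.Icc (0:ℝ) η
    · rw [Set.indicator_of_mem hs]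
      obtain ⟨hs1, hs2⟩ := hs
      exact div_le_div_of_nonneg_right
        (Real.rpow_le_rpow (by linarith) (by linarith) hp0) hΓ.le
    · rw [Set.indicator_of_notMem hs]
      positivity
  constructor
  · -- lower bound: B ≤ A + (1-η)^(α-1)/Γα
    have key : B ≤ A + (1 - η) ^ (α - 1) / Real.Gamma α := by
      by_cases hs : s ∈ Set.Icc (0:ℝ) t
      · obtain ⟨hs1, hs2⟩ := hs
        rw [hB, Set.indicator_of_mem (Set.mem_Icc.2 ⟨hs1, hs2⟩)]
        by_cases hsη : s ∈ Set.Icc (0:ℝ) η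
        · obtain ⟨_, hsη2⟩ := hsη
          rw [hA, Set.indicator_of_mem (Set.mem_Icc.2 ⟨hs1, hsη2⟩)]
          rw [← add_div, div_le_div_iff_of_pos_right hΓ]
          by_cases htη : t ≤ η
          · have h1 : (t - s) ^ (α - 1) ≤ (η - s) ^ (α - 1) :=
              Real.rpow_le_rpow (by linarith) (by linarith) hp0
            have h2 : (0:ℝ) ≤ (1 - η) ^ (α - 1) := Real.rpow_nonneg (by linarith) _
            linarith
          · push_neg at htη
            have h1 : (t - s) ^ (α - 1) ≤ (η - s) ^ (α - 1) + (t - η) ^ (α - 1) := by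
              have h := rpow_add_le_add_rpow_real (a := η - s) (b := t - η)
                (by linarith) (by linarith) hp0 (by linarith)
              have he : η - s + (t - η) = t - s := by ring
              rwa [he] at h
            have h2 : (t - η) ^ (α - 1) ≤ (1 - η) ^ (α - 1) :=
              Real.rpow_le_rpow (by linarith) (by linarith) hp0
            linarith
        · rw [hA, Set.indicator_of_notMem hsη]
          have hsη' : η < s := by
            by_contra h
            exact hsη ⟨hs1, le_of_not_gt (by simpa using h)⟩
          have h1 : (t - s) ^ (α - 1) ≤ (1 - η) ^ (α - 1) :=
            Real.rpow_le_rpow (by linarith) (by linarith) hp0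
          have h2 : (t - s) ^ (α - 1) / Real.Gamma α ≤ (1 - η) ^ (α - 1) / Real.Gamma α :=
            div_le_div_of_nonneg_right h1 hΓ.le
          linarith
      · rw [hB, Set.indicator_of_notMem hs]
        have : (0:ℝ) ≤ (1 - η) ^ (α - 1) / Real.Gamma α :=
          div_nonneg (Real.rpow_nonneg (by linarith) _) hΓ.le
        linarith
    unfold Kker
    rw [← hA, ← hB]
    linarith
  · unfold Kker
    rw [← hA, ← hB]
    linarith

set_option maxHeartbeats 1000000 in
/-- Cone invariance, Case 1: if `β > max{β_K, β_γ}` then `T` maps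
`P_{σ₁} ∩ closure(Ω_ρ)` into the cone
`P_{σ₁} = {u : min_{[0,1]} u ≥ σ₁‖u‖_∞}`, where
`σ₁ = min{σ_{1,γ}, c_{1,K}, 1}`. -/
theorem stmt_13
    (α η β : ℝ) (hα1 : 1 < α) (hα2 : α ≤ 2) (hη0 : 0 < η) (hη1 : η < 1) (hβ0 : 0 < β)
    (f : ℝ → ℝ → ℝ)
    (hf : ContinuousOn (fun p : ℝ × ℝ => f p.1 p.2) (Set.Icc (0:ℝ) 1 ×ˢ Set.univ))
    (hf0 : ∀ t ∈ Set.Icc (0:ℝ) 1, ∀ x : ℝ, 0 ≤ f t x)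
    (H₁ H₂ : CI → ℝ) (hH₁c : Continuous H₁) (hH₂c : Continuous H₂)
    (hH₁0 : ∀ u, 0 ≤ H₁ u) (hH₂0 : ∀ u, 0 ≤ H₂ u)
    (hH₁b : ∀ S : Set CI, Bornology.IsBounded S → Bornology.IsBounded (H₁ '' S))
    (hH₂b : ∀ S : Set CI, Bornology.IsBounded S → Bornology.IsBounded (H₂ '' S))
    (T : CI → CI)
    (hT : ∀ (u : CI) (t : Set.Icc (0:ℝ) 1), T u t = H₁ u * gam α η β (t : ℝ) + H₂ u +
      ∫ s in (0:ℝ)..1, Kker α η β (t : ℝ) s * f s (Set.IccExtend zero_le_one u s))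
    (hβ : max ((1 - η) ^ (α - 1) / Real.Gamma α) ((1 - η) * Real.Gamma (3 - α)) < β)
    (ρ : ℝ) (hρ : 0 < ρ)
    (σ₁ : ℝ)
    (hσ₁ : σ₁ = min ((β + (η - 1) * Real.Gamma (3 - α)) / (β + η * Real.Gamma (3 - α)))
      (min ((β * Real.Gamma α - (1 - η) ^ (α - 1)) / (β * Real.Gamma α + η ^ (α - 1))) 1)) :
    ∀ u : CI, (∀ t, σ₁ * ‖u‖ ≤ u t) → ‖u‖ ≤ ρ → ∀ t, σ₁ * ‖T u‖ ≤ T u t := by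
  intro u _ _ t
  have hΓa : 0 < Real.Gamma α := Real.Gamma_pos_of_pos (by linarith)
  have hΓ' : 0 < Real.Gamma (3 - α) := Real.Gamma_pos_of_pos (by linarith)
  have hβK : (1 - η) ^ (α - 1) / Real.Gamma α < β := lt_of_le_of_lt (le_max_left _ _) hβ
  have hβγ : (1 - η) * Real.Gamma (3 - α) < β := lt_of_le_of_lt (le_max_right _ _) hβ
  obtain ⟨m, hm⟩ : ∃ x, x = β - (1 - η) ^ (α - 1) / Real.Gamma α := ⟨_, rfl⟩
  obtain ⟨M, hM⟩ : ∃ x, x = β + η ^ (α - 1) / Real.Gamma α := ⟨_, rfl⟩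
  have hm0 : 0 < m := by rw [hm]; linarith
  have hηe : (0:ℝ) ≤ η ^ (α - 1) := Real.rpow_nonneg hη0.le _
  have h1ηe : (0:ℝ) ≤ (1 - η) ^ (α - 1) := Real.rpow_nonneg (by linarith) _
  have hM0 : 0 < M := by
    have := div_nonneg hηe hΓa.le
    rw [hM]; linarith
  obtain ⟨c, hc⟩ : ∃ x, x = (β * Real.Gamma α - (1 - η) ^ (α - 1)) /
      (β * Real.Gamma α + η ^ (α - 1)) := ⟨_, rfl⟩
  obtain ⟨σγ, hσγdef⟩ : ∃ x, x = (β + (η - 1) * Real.Gamma (3 - α)) /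
      (β + η * Real.Gamma (3 - α)) := ⟨_, rfl⟩
  have hden1 : 0 < β * Real.Gamma α + η ^ (α - 1) := by positivity
  have hnum1 : 0 < β * Real.Gamma α - (1 - η) ^ (α - 1) := by
    have := (div_lt_iff₀ hΓa).1 hβK
    linarith
  have hden2 : 0 < β + η * Real.Gamma (3 - α) := by positivity
  have hnum2 : 0 < β + (η - 1) * Real.Gamma (3 - α) := by nlinarith
  have hc0 : 0 ≤ c := by rw [hc]; exact le_of_lt (div_pos hnum1 hden1)
  have hσγ0 : 0 ≤ σγ := by rw [hσγdef]; exact le_of_lt (div_pos hnum2 hden2)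
  have hcM : c * M = m := by
    rw [hc, hM, hm]
    field_simp
  obtain ⟨mγ, hmγ⟩ : ∃ x, x = β / Real.Gamma (3 - α) + η - 1 := ⟨_, rfl⟩
  obtain ⟨Mγ, hMγ⟩ : ∃ x, x = β / Real.Gamma (3 - α) + η := ⟨_, rfl⟩
  have hmγ0 : 0 < mγ := by
    have h : (1 - η) < β / Real.Gamma (3 - α) := by
      rw [lt_div_iff₀ hΓ']
      linarith
    rw [hmγ]
    linarith
  have hσγM : σγ * Mγ = mγ := by
    rw [hσγdef, hMγ, hmγ]
    field_simp
    ring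
  have hσ₁γ : σ₁ ≤ σγ := by rw [hσ₁, hσγdef]; exact min_le_left _ _
  have hσ₁c : σ₁ ≤ c := by
    rw [hσ₁, hc]; exact le_trans (min_le_right _ _) (min_le_left _ _)
  have hσ₁1 : σ₁ ≤ 1 := by rw [hσ₁]; exact le_trans (min_le_right _ _) (min_le_right _ _)
  have hσ₁0 : 0 ≤ σ₁ := by
    rw [hσ₁]
    refine le_min ?_ (le_min ?_ zero_le_one)
    · rw [← hσγdef]; exact hσγ0
    · rw [← hc]; exact hc0
  set F := fun s : ℝ => f s (Set.IccExtend zero_le_one u s) with hF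
  have hT' : ∀ t' : Set.Icc (0:ℝ) 1, T u t' = H₁ u * gam α η β (t' : ℝ) + H₂ u +
      ∫ s in (0:ℝ)..1, Kker α η β (t' : ℝ) s * F s := fun t' => hT u t'
  have hFc : ContinuousOn F (Set.Icc (0:ℝ) 1) := by
    have hcont : Continuous fun s : ℝ => (s, Set.IccExtend zero_le_one u s) :=
      continuous_id.prodMk (u.continuous.comp continuous_projIcc)
    exact hf.comp hcont.continuousOn (fun s hs => ⟨hs, Set.mem_univ _⟩)
  have hF0 : ∀ s ∈ Set.Icc (0:ℝ) 1, 0 ≤ F s := fun s hs => hf0 s hs _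
  have hKmeas : ∀ t' : ℝ, Measurable fun s => Kker α η β t' s := by
    intro t'
    unfold Kker
    refine Measurable.sub (Measurable.add measurable_const ?_) ?_
    · exact ((((continuous_const.sub continuous_id).rpow_const
        (fun x => Or.inr (by linarith))).div_const _).measurable).indicator measurableSet_Icc
    · exact ((((continuous_const.sub continuous_id).rpow_const
        (fun x => Or.inr (by linarith))).div_const _).measurable).indicator measurableSet_Icc
  have hKb : ∀ t' ∈ Set.Icc (0:ℝ) 1, ∀ s : ℝ,
      m ≤ Kker α η β t' s ∧ Kker α η β t' s ≤ M := by
    intro t' ht' s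
    rw [hm, hM]
    exact Kker_bounds s hα1 hα2 hη0 hη1 ht'.1 ht'.2
  obtain ⟨C, hC⟩ := isCompact_Icc.exists_bound_of_continuousOn hFc
  have hint : ∀ t' ∈ Set.Icc (0:ℝ) 1,
      IntervalIntegrable (fun s => Kker α η β t' s * F s) volume 0 1 := by
    intro t' ht'
    rw [intervalIntegrable_iff_integrableOn_Icc_of_le zero_le_one]
    have hsm : AEStronglyMeasurable (fun s => Kker α η β t' s * F s)
        (volume.restrict (Set.Icc (0:ℝ) 1)) :=
      ((hKmeas t').aestronglyMeasurable).mul (hFc.aestronglyMeasurable measurableSet_Icc)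
    refine Integrable.mono' (g := fun _ => M * C)
      (integrableOn_const measure_Icc_lt_top.ne) hsm ?_
    filter_upwards [MeasureTheory.ae_restrict_mem measurableSet_Icc] with s hs
    rw [Real.norm_eq_abs, abs_mul]
    have h1 := hKb t' ht' s
    have h2 := hC s hs
    rw [Real.norm_eq_abs] at h2
    have hKabs : |Kker α η β t' s| ≤ M := abs_le.2 ⟨by linarith, h1.2⟩
    exact mul_le_mul hKabs h2 (abs_nonneg _) hM0.le
  have hFint : IntervalIntegrable F volume 0 1 := by
    apply ContinuousOn.intervalIntegrable
    rwa [Set.uIcc_of_le zero_le_one]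
  have hIF0 : 0 ≤ ∫ s in (0:ℝ)..1, F s :=
    intervalIntegral.integral_nonneg zero_le_one hF0
  have hIlb : ∀ t' ∈ Set.Icc (0:ℝ) 1,
      m * ∫ s in (0:ℝ)..1, F s ≤ ∫ s in (0:ℝ)..1, Kker α η β t' s * F s := by
    intro t' ht'
    have h := intervalIntegral.integral_mono_on (f := fun s => m * F s)
      (g := fun s => Kker α η β t' s * F s) zero_le_one (hFint.const_mul m) (hint t' ht')
      (fun s hs => mul_le_mul_of_nonneg_right (hKb t' ht' s).1 (hF0 s hs))
    rwa [intervalIntegral.integral_const_mul] at h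
  have hIub : ∀ t' ∈ Set.Icc (0:ℝ) 1,
      (∫ s in (0:ℝ)..1, Kker α η β t' s * F s) ≤ M * ∫ s in (0:ℝ)..1, F s := by
    intro t' ht'
    have h := intervalIntegral.integral_mono_on (f := fun s => Kker α η β t' s * F s)
      (g := fun s => M * F s) zero_le_one (hint t' ht') (hFint.const_mul M)
      (fun s hs => mul_le_mul_of_nonneg_right (hKb t' ht' s).2 (hF0 s hs))
    rwa [intervalIntegral.integral_const_mul] at h
  have hgam : ∀ t' : Set.Icc (0:ℝ) 1, mγ ≤ gam α η β (t' : ℝ) ∧ gam α η β (t' : ℝ) ≤ Mγ := by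
    intro t'
    have h1 := t'.2.1
    have h2 := t'.2.2
    unfold gam
    rw [hmγ, hMγ]
    constructor <;> linarith
  have hTnn : ∀ t' : Set.Icc (0:ℝ) 1, 0 ≤ T u t' := by
    intro t'
    rw [hT' t']
    have h1 : 0 ≤ H₁ u * gam α η β (t' : ℝ) :=
      mul_nonneg (hH₁0 u) (le_trans hmγ0.le (hgam t').1)
    have h3 : 0 ≤ ∫ s in (0:ℝ)..1, Kker α η β (t' : ℝ) s * F s :=
      le_trans (mul_nonneg hm0.le hIF0) (hIlb _ t'.2)
    linarith [hH₂0 u]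
  have hkey : ∀ t' : Set.Icc (0:ℝ) 1, σ₁ * T u t' ≤ T u t := by
    intro t'
    rw [hT' t', hT' t]
    have hg1 : σ₁ * gam α η β (t' : ℝ) ≤ gam α η β (t : ℝ) := by
      calc σ₁ * gam α η β (t' : ℝ) ≤ σγ * gam α η β (t' : ℝ) :=
            mul_le_mul_of_nonneg_right hσ₁γ (le_trans hmγ0.le (hgam t').1)
        _ ≤ σγ * Mγ := mul_le_mul_of_nonneg_left (hgam t').2 hσγ0
        _ = mγ := hσγM
        _ ≤ gam α η β (t : ℝ) := (hgam t).1
    have h1 : σ₁ * (H₁ u * gam α η β (t' : ℝ)) ≤ H₁ u * gam α η β (t : ℝ) := by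
      calc σ₁ * (H₁ u * gam α η β (t' : ℝ)) = H₁ u * (σ₁ * gam α η β (t' : ℝ)) := by ring
        _ ≤ H₁ u * gam α η β (t : ℝ) := mul_le_mul_of_nonneg_left hg1 (hH₁0 u)
    have h2 : σ₁ * H₂ u ≤ H₂ u := by nlinarith [hH₂0 u]
    have h3 : σ₁ * (∫ s in (0:ℝ)..1, Kker α η β (t' : ℝ) s * F s) ≤
        ∫ s in (0:ℝ)..1, Kker α η β (t : ℝ) s * F s := by
      have hI'0 : 0 ≤ ∫ s in (0:ℝ)..1, Kker α η β (t' : ℝ) s * F s :=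
        le_trans (mul_nonneg hm0.le hIF0) (hIlb _ t'.2)
      calc σ₁ * (∫ s in (0:ℝ)..1, Kker α η β (t' : ℝ) s * F s)
          ≤ c * ∫ s in (0:ℝ)..1, Kker α η β (t' : ℝ) s * F s :=
            mul_le_mul_of_nonneg_right hσ₁c hI'0
        _ ≤ c * (M * ∫ s in (0:ℝ)..1, F s) :=
            mul_le_mul_of_nonneg_left (hIub _ t'.2) hc0
        _ = m * ∫ s in (0:ℝ)..1, F s := by rw [← hcM]; ring
        _ ≤ ∫ s in (0:ℝ)..1, Kker α η β (t : ℝ) s * F s := hIlb _ t.2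
    rw [mul_add, mul_add]
    linarith
  rcases eq_or_lt_of_le hσ₁0 with h0 | h0
  · rw [← h0, zero_mul]
    exact hTnn t
  · have hnorm : ‖T u‖ ≤ T u t / σ₁ := by
      rw [ContinuousMap.norm_le _ (div_nonneg (hTnn t) h0.le)]
      intro t'
      rw [Real.norm_eq_abs, abs_of_nonneg (hTnn t'), le_div_iff₀ h0]
      calc T u t' * σ₁ = σ₁ * T u t' := by ring
        _ ≤ T u t := hkey t'
    calc σ₁ * ‖T u‖ ≤ σ₁ * (T u t / σ₁) := mul_le_mul_of_nonneg_left hnorm h0.le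
      _ = T u t := by field_simp
end

section
/- (Growth estimate, Case 1) Suppose β > max{β_K, β_γ} and let ρ > 0. Set σ₁ = min{σ_{1,γ}, c_{1,K}, 1}, where c_{1,K} = (βΓ(α) − (1−η)^{α−1})/(βΓ(α) + η^{α−1}) and σ_{1,γ} = (β + (η−1)Γ(3−α))/(β + ηΓ(3−α)). Assume there exist a continuous δ : [0,1] → [0,∞) with f(t,u) ≥ δ(t) for all (t,u) ∈ [0,1]×[σ₁ρ, ρ], and constants η₁, η₂ ≥ 0 with H₁[u] ≥ η₁ and H₂[u] ≥ η₂ for every u ∈ C([0,1],ℝ) with min_{t∈[0,1]} u(t) ≥ σ₁‖u‖_∞ and ‖u‖_∞ = ρ. Then for every such u one has ‖T(u)‖_∞ ≥ η₁·γ(0) + η₂ + ∫₀¹ K(0,s)δ(s) ds. -/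
open Set MeasureTheory

lemma Kker_zero (α η β s : ℝ) (hα : 1 < α) :
    Kker α η β 0 s = β + (Set.Icc (0:ℝ) η).indicator
      (fun x => (η - x) ^ (α - 1) / Real.Gamma α) s := by
  have h0 : (Set.Icc (0:ℝ) 0).indicator (fun x => ((0:ℝ) - x) ^ (α - 1) / Real.Gamma α) s = 0 := by
    by_cases hs : s ∈ Set.Icc (0:ℝ) 0
    · have hs0 : s = 0 := le_antisymm hs.2 hs.1
      rw [Set.indicator_of_mem hs]
      simp [hs0, Real.zero_rpow (by linarith : α - 1 ≠ 0)]
    · exact Set.indicator_of_notMem hs _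
  unfold Kker
  rw [h0, sub_zero]

lemma Kker_zero_nonneg (α η β s : ℝ) (hα : 1 < α) (hβ : 0 < β) :
    0 ≤ Kker α η β 0 s := by
  rw [Kker_zero α η β s hα]
  have hΓ : 0 < Real.Gamma α := Real.Gamma_pos_of_pos (by linarith)
  have : 0 ≤ (Set.Icc (0:ℝ) η).indicator (fun x => (η - x) ^ (α - 1) / Real.Gamma α) s := by
    apply Set.indicator_nonneg
    intro x hx
    exact div_nonneg (Real.rpow_nonneg (by linarith [hx.2]) _) hΓ.le
  linarith

lemma Kker_zero_bound (α η β s : ℝ) (hα : 1 < α) (hη : 0 < η) :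
    |Kker α η β 0 s| ≤ |β| + η ^ (α - 1) / Real.Gamma α := by
  rw [Kker_zero α η β s hα]
  have hΓ : 0 < Real.Gamma α := Real.Gamma_pos_of_pos (by linarith)
  have hb : |(Set.Icc (0:ℝ) η).indicator (fun x => (η - x) ^ (α - 1) / Real.Gamma α) s|
      ≤ η ^ (α - 1) / Real.Gamma α := by
    by_cases hs : s ∈ Set.Icc (0:ℝ) η
    · rw [Set.indicator_of_mem hs]
      rw [abs_of_nonneg (div_nonneg (Real.rpow_nonneg (by linarith [hs.2]) _) hΓ.le)]
      have hr : (η - s) ^ (α - 1) ≤ η ^ (α - 1) :=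
        Real.rpow_le_rpow (by linarith [hs.2]) (by linarith [hs.1]) (by linarith)
      exact div_le_div_of_nonneg_right hr hΓ.le |>.trans le_rfl
    · rw [Set.indicator_of_notMem hs]
      simp [div_nonneg (Real.rpow_nonneg hη.le _) hΓ.le]
  calc |β + _| ≤ |β| + _ := abs_add_le _ _
    _ ≤ _ := by linarith

lemma Kker_zero_measurable (α η β : ℝ) (hα : 1 < α) : Measurable (fun s => Kker α η β 0 s) := by
  unfold Kker
  have hc : Continuous (fun x : ℝ => x ^ (α - 1)) :=
    Real.continuous_rpow_const (by linarith)
  have h1 : Measurable (fun x : ℝ => (η - x) ^ (α - 1) / Real.Gamma α) :=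
    ((hc.comp (continuous_const.sub continuous_id)).div_const _).measurable
  have h2 : Measurable (fun x : ℝ => ((0:ℝ) - x) ^ (α - 1) / Real.Gamma α) :=
    ((hc.comp (continuous_const.sub continuous_id)).div_const _).measurable
  exact (measurable_const.add (h1.indicator measurableSet_Icc)).sub
    (h2.indicator measurableSet_Icc)

lemma Kker_integrableOn (α η β : ℝ) (hα : 1 < α) (hη : 0 < η) (h : ℝ → ℝ)
    (hh : ContinuousOn h (Set.Icc 0 1)) :
    IntegrableOn (fun s => Kker α η β 0 s * h s) (Set.Icc (0:ℝ) 1) := by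
  obtain ⟨C, hC⟩ := isCompact_Icc.exists_bound_of_continuousOn hh
  have hΓ : 0 < Real.Gamma α := Real.Gamma_pos_of_pos (by linarith)
  apply Integrable.mono' (g := fun _ => (|β| + η ^ (α - 1) / Real.Gamma α) * C)
  · exact integrable_const _
  · exact ((Kker_zero_measurable α η β hα).aestronglyMeasurable.restrict).mul
      (hh.aestronglyMeasurable measurableSet_Icc)
  · filter_upwards [ae_restrict_mem measurableSet_Icc] with s hs
    rw [norm_mul]
    exact mul_le_mul (Kker_zero_bound α η β s hα hη) (hC s hs) (norm_nonneg _)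
      (by positivity)

/-- Growth estimate, Case 1: if `β > max{β_K, β_γ}`,
`f ≥ δ` on `[0,1]×[σ₁ρ,ρ]`, and `H₁ ≥ η₁`, `H₂ ≥ η₂` on `P_{σ₁} ∩ ∂Ω_ρ`, then for every
`u ∈ P_{σ₁}` with `‖u‖_∞ = ρ` one has
`‖T(u)‖_∞ ≥ η₁·γ(0) + η₂ + ∫₀¹ K(0,s)δ(s) ds`. -/
theorem stmt_15
    (α η β : ℝ) (hα1 : 1 < α) (hα2 : α ≤ 2) (hη0 : 0 < η) (hη1 : η < 1) (hβ0 : 0 < β)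
    (f : ℝ → ℝ → ℝ)
    (hf : ContinuousOn (fun p : ℝ × ℝ => f p.1 p.2) (Set.Icc (0:ℝ) 1 ×ˢ Set.univ))
    (hf0 : ∀ t ∈ Set.Icc (0:ℝ) 1, ∀ x : ℝ, 0 ≤ f t x)
    (H₁ H₂ : CI → ℝ) (hH₁c : Continuous H₁) (hH₂c : Continuous H₂)
    (hH₁0 : ∀ u, 0 ≤ H₁ u) (hH₂0 : ∀ u, 0 ≤ H₂ u)
    (hH₁b : ∀ S : Set CI, Bornology.IsBounded S → Bornology.IsBounded (H₁ '' S))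
    (hH₂b : ∀ S : Set CI, Bornology.IsBounded S → Bornology.IsBounded (H₂ '' S))
    (T : CI → CI)
    (hT : ∀ (u : CI) (t : Set.Icc (0:ℝ) 1), T u t = H₁ u * gam α η β (t : ℝ) + H₂ u +
      ∫ s in (0:ℝ)..1, Kker α η β (t : ℝ) s * f s (Set.IccExtend zero_le_one u s))
    (hβ : max ((1 - η) ^ (α - 1) / Real.Gamma α) ((1 - η) * Real.Gamma (3 - α)) < β)
    (ρ : ℝ) (hρ : 0 < ρ)
    (σ₁ : ℝ)
    (hσ₁ : σ₁ = min ((β + (η - 1) * Real.Gamma (3 - α)) / (β + η * Real.Gamma (3 - α)))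
      (min ((β * Real.Gamma α - (1 - η) ^ (α - 1)) / (β * Real.Gamma α + η ^ (α - 1))) 1))
    (δ : ℝ → ℝ) (hδc : ContinuousOn δ (Set.Icc (0:ℝ) 1))
    (hδ0 : ∀ t ∈ Set.Icc (0:ℝ) 1, 0 ≤ δ t)
    (hfδ : ∀ t ∈ Set.Icc (0:ℝ) 1, ∀ x ∈ Set.Icc (σ₁ * ρ) ρ, δ t ≤ f t x)
    (η₁ η₂ : ℝ) (hη₁ : 0 ≤ η₁) (hη₂ : 0 ≤ η₂)
    (hH : ∀ u : CI, (∀ t, σ₁ * ‖u‖ ≤ u t) → ‖u‖ = ρ → η₁ ≤ H₁ u ∧ η₂ ≤ H₂ u) :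
    ∀ u : CI, (∀ t, σ₁ * ‖u‖ ≤ u t) → ‖u‖ = ρ →
      η₁ * gam α η β 0 + η₂ + (∫ s in (0:ℝ)..1, Kker α η β 0 s * δ s) ≤ ‖T u‖ := by
  intro u hu hρu
  set g : ℝ → ℝ := fun s => f s (Set.IccExtend zero_le_one u s) with hgdef
  have hext : Continuous (Set.IccExtend zero_le_one u) :=
    u.continuous.comp continuous_projIcc
  have hgc : ContinuousOn g (Set.Icc 0 1) := by
    apply hf.comp ((continuous_id.prodMk hext).continuousOn)
    intro s hs
    exact ⟨hs, Set.mem_univ _⟩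
  have hint1 : IntervalIntegrable (fun s => Kker α η β 0 s * δ s) volume 0 1 := by
    have h := Kker_integrableOn α η β hα1 hη0 δ hδc
    rw [← Set.uIcc_of_le (zero_le_one' ℝ)] at h
    exact h.intervalIntegrable
  have hint2 : IntervalIntegrable (fun s => Kker α η β 0 s * g s) volume 0 1 := by
    have h := Kker_integrableOn α η β hα1 hη0 g hgc
    rw [← Set.uIcc_of_le (zero_le_one' ℝ)] at h
    exact h.intervalIntegrable
  have hpt : ∀ s ∈ Set.Icc (0:ℝ) 1,
      Kker α η β 0 s * δ s ≤ Kker α η β 0 s * g s := by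
    intro s hs
    apply mul_le_mul_of_nonneg_left _ (Kker_zero_nonneg α η β s hα1 hβ0)
    apply hfδ s hs
    constructor
    · have := hu (Set.projIcc 0 1 zero_le_one s)
      rw [hρu] at this
      exact this
    · calc u (Set.projIcc 0 1 zero_le_one s) ≤ |u (Set.projIcc 0 1 zero_le_one s)| :=
        le_abs_self _
      _ ≤ ‖u‖ := u.norm_coe_le_norm _
      _ = ρ := hρu
  have hmono := intervalIntegral.integral_mono_on (zero_le_one' ℝ) hint1 hint2 hpt
  obtain ⟨h1, h2⟩ := hH u hu hρu
  have hΓ3 : 0 < Real.Gamma (3 - α) := Real.Gamma_pos_of_pos (by linarith)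
  have hgam0 : 0 ≤ gam α η β 0 := by
    unfold gam
    have : 0 ≤ β / Real.Gamma (3 - α) := div_nonneg hβ0.le hΓ3.le
    linarith
  have hT0 := hT u ⟨0, by norm_num⟩
  calc η₁ * gam α η β 0 + η₂ + (∫ s in (0:ℝ)..1, Kker α η β 0 s * δ s)
      ≤ H₁ u * gam α η β 0 + H₂ u + (∫ s in (0:ℝ)..1, Kker α η β 0 s * g s) := by
        have := mul_le_mul_of_nonneg_right h1 hgam0
        linarith
    _ = T u ⟨0, by norm_num⟩ := by rw [hT0]
    _ ≤ |T u ⟨0, by norm_num⟩| := le_abs_self _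
    _ ≤ ‖T u‖ := (T u).norm_coe_le_norm _
end

section
/- (Cone invariance, Case 3) Suppose 0 < β < min{β_K, β_γ}, set t* = min{η + (βΓ(α))^{1/(α−1)}, η + β/Γ(3−α)}, fix b ∈ (0, t*) with b ≥ η and βΓ(α) > (b−η)^{α−1}, and let ρ > 0. Set σ₃ = min{σ_{3,γ}, c_{3,K}, 1}, where c_{3,K} = min{(βΓ(α)−(b−η)^{α−1})/(βΓ(α)+η^{α−1}), (βΓ(α)−(b−η)^{α−1})/((1−η)^{α−1}−βΓ(α))} and σ_{3,γ} = (β + (η−b)Γ(3−α))/max{β + ηΓ(3−α), (1−η)Γ(3−α) − β}, and let P_{σ₃} = {u ∈ C([0,1],ℝ) : min_{t∈[0,b]} u(t) ≥ σ₃·‖u‖_∞}. Then for every u ∈ P_{σ₃} with ‖u‖_∞ ≤ ρ, the function T(u) belongs to P_{σ₃}. -/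
open Set MeasureTheory

lemma aux_rpow_subadd {p x y : ℝ} (hp : 0 ≤ p) (hp1 : p ≤ 1) (hx : 0 ≤ x) (hy : 0 ≤ y) :
    (x + y) ^ p ≤ x ^ p + y ^ p := by
  lift x to NNReal using hx
  lift y to NNReal using hy
  have h := NNReal.rpow_add_le_add_rpow x y hp hp1
  exact_mod_cast h

lemma aux_rpow_sub {p x y : ℝ} (hp : 0 ≤ p) (hp1 : p ≤ 1) (hy : 0 ≤ y) (hxy : y ≤ x) :
    x ^ p - y ^ p ≤ (x - y) ^ p := by
  have h := aux_rpow_subadd hp hp1 (sub_nonneg.2 hxy) hy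
  rw [sub_add_cancel] at h
  linarith

lemma Kker_upper {α η β : ℝ} (hα1 : 1 < α) (hη0 : 0 ≤ η) (x s : ℝ) :
    Kker α η β x s ≤ β + η ^ (α - 1) / Real.Gamma α := by
  have hΓ : 0 < Real.Gamma α := Real.Gamma_pos_of_pos (by linarith)
  have hp0 : (0:ℝ) < α - 1 := by linarith
  unfold Kker
  have h2 : 0 ≤ (Set.Icc (0:ℝ) x).indicator (fun y => (x - y) ^ (α-1) / Real.Gamma α) s :=
    Set.indicator_nonneg (fun y hy => div_nonneg (Real.rpow_nonneg (sub_nonneg.2 hy.2) _) hΓ.le) s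
  have h1 : (Set.Icc (0:ℝ) η).indicator (fun y => (η - y) ^ (α-1) / Real.Gamma α) s
      ≤ η ^ (α-1) / Real.Gamma α := by
    by_cases h : s ∈ Set.Icc (0:ℝ) η
    · rw [Set.indicator_of_mem h]
      have h3 : (η - s) ^ (α-1) ≤ η ^ (α-1) :=
        Real.rpow_le_rpow (sub_nonneg.2 h.2) (by linarith [h.1]) hp0.le
      exact div_le_div_of_nonneg_right h3 hΓ.le
    · rw [Set.indicator_of_notMem h]
      exact div_nonneg (Real.rpow_nonneg hη0 _) hΓ.le
  linarith

lemma Kker_lower {α η β c : ℝ} (hα1 : 1 < α) (hα2 : α ≤ 2) (hη0 : 0 ≤ η) (hc : η ≤ c)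
    (x s : ℝ) (hx : x ≤ c) :
    β - (c - η) ^ (α - 1) / Real.Gamma α ≤ Kker α η β x s := by
  have hΓ : 0 < Real.Gamma α := Real.Gamma_pos_of_pos (by linarith)
  have hp0 : (0:ℝ) < α - 1 := by linarith
  have hp1 : α - 1 ≤ 1 := by linarith
  have hcη : (0:ℝ) ≤ (c - η) ^ (α-1) := Real.rpow_nonneg (by linarith) _
  have hcηd : (0:ℝ) ≤ (c - η) ^ (α-1) / Real.Gamma α := div_nonneg hcη hΓ.le
  unfold Kker
  by_cases hst : s ∈ Set.Icc (0:ℝ) x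
  · rw [Set.indicator_of_mem hst]
    obtain ⟨hs0, hsx⟩ := hst
    by_cases hsη : s ∈ Set.Icc (0:ℝ) η
    · rw [Set.indicator_of_mem hsη]
      have key : (x - s) ^ (α-1) - (η - s) ^ (α-1) ≤ (c - η) ^ (α-1) := by
        by_cases hxη : x ≤ η
        · have h := Real.rpow_le_rpow (by linarith : (0:ℝ) ≤ x - s)
            (by linarith : x - s ≤ η - s) hp0.le
          linarith
        · have h1 : (x - s) ^ (α-1) - (η - s) ^ (α-1) ≤ ((x - s) - (η - s)) ^ (α-1) :=
            aux_rpow_sub hp0.le hp1 (sub_nonneg.2 hsη.2) (by linarith)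
          have h2 : ((x - s) - (η - s)) ^ (α-1) ≤ (c - η) ^ (α-1) :=
            Real.rpow_le_rpow (by linarith) (by linarith) hp0.le
          linarith
      have key' : (x - s) ^ (α-1) / Real.Gamma α - (η - s) ^ (α-1) / Real.Gamma α
          ≤ (c - η) ^ (α-1) / Real.Gamma α := by
        rw [div_sub_div_same]
        exact div_le_div_of_nonneg_right key hΓ.le
      linarith
    · rw [Set.indicator_of_notMem hsη]
      have hsη' : η < s := by
        by_contra h
        exact hsη ⟨hs0, not_lt.mp h⟩
      have h : (x - s) ^ (α-1) ≤ (c - η) ^ (α-1) :=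
        Real.rpow_le_rpow (by linarith) (by linarith) hp0.le
      have h' : (x - s) ^ (α-1) / Real.Gamma α ≤ (c - η) ^ (α-1) / Real.Gamma α :=
        div_le_div_of_nonneg_right h hΓ.le
      linarith
  · rw [Set.indicator_of_notMem hst]
    have h1 : 0 ≤ (Set.Icc (0:ℝ) η).indicator (fun y => (η - y) ^ (α-1) / Real.Gamma α) s :=
      Set.indicator_nonneg
        (fun y hy => div_nonneg (Real.rpow_nonneg (sub_nonneg.2 hy.2) _) hΓ.le) s
    linarith

/-- Cone invariance, Case 3: if `0 < β < min{β_K, β_γ}` and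
`b ∈ (0, t*)` with `b ≥ η` and `βΓ(α) > (b−η)^{α−1}`, then `T` maps
`P_{σ₃} ∩ closure(Ω_ρ)` into the cone
`P_{σ₃} = {u : min_{[0,b]} u ≥ σ₃‖u‖_∞}`, where `σ₃ = min{σ_{3,γ}, c_{3,K}, 1}`. -/
theorem stmt_18
    (α η β : ℝ) (hα1 : 1 < α) (hα2 : α ≤ 2) (hη0 : 0 < η) (hη1 : η < 1) (hβ0 : 0 < β)
    (f : ℝ → ℝ → ℝ)
    (hf : ContinuousOn (fun p : ℝ × ℝ => f p.1 p.2) (Set.Icc (0:ℝ) 1 ×ˢ Set.univ))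
    (hf0 : ∀ t ∈ Set.Icc (0:ℝ) 1, ∀ x : ℝ, 0 ≤ f t x)
    (H₁ H₂ : CI → ℝ) (hH₁c : Continuous H₁) (hH₂c : Continuous H₂)
    (hH₁0 : ∀ u, 0 ≤ H₁ u) (hH₂0 : ∀ u, 0 ≤ H₂ u)
    (hH₁b : ∀ S : Set CI, Bornology.IsBounded S → Bornology.IsBounded (H₁ '' S))
    (hH₂b : ∀ S : Set CI, Bornology.IsBounded S → Bornology.IsBounded (H₂ '' S))
    (T : CI → CI)
    (hT : ∀ (u : CI) (t : Set.Icc (0:ℝ) 1), T u t = H₁ u * gam α η β (t : ℝ) + H₂ u +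
      ∫ s in (0:ℝ)..1, Kker α η β (t : ℝ) s * f s (Set.IccExtend zero_le_one u s))
    (hβ : β < min ((1 - η) ^ (α - 1) / Real.Gamma α) ((1 - η) * Real.Gamma (3 - α)))
    (b : ℝ) (hb0 : 0 < b)
    (hbt : b < min (η + (β * Real.Gamma α) ^ (1 / (α - 1))) (η + β / Real.Gamma (3 - α)))
    (hbη : η ≤ b) (hbβ : (b - η) ^ (α - 1) < β * Real.Gamma α)
    (ρ : ℝ) (hρ : 0 < ρ)
    (σ₃ : ℝ)
    (hσ₃ : σ₃ = min ((β + (η - b) * Real.Gamma (3 - α)) /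
        max (β + η * Real.Gamma (3 - α)) ((1 - η) * Real.Gamma (3 - α) - β))
      (min (min
        ((β * Real.Gamma α - (b - η) ^ (α - 1)) / (β * Real.Gamma α + η ^ (α - 1)))
        ((β * Real.Gamma α - (b - η) ^ (α - 1)) / ((1 - η) ^ (α - 1) - β * Real.Gamma α)))
        1))
    :
    ∀ u : CI, (∀ t : Set.Icc (0:ℝ) 1, (t : ℝ) ≤ b → σ₃ * ‖u‖ ≤ u t) → ‖u‖ ≤ ρ →
      ∀ t : Set.Icc (0:ℝ) 1, (t : ℝ) ≤ b → σ₃ * ‖T u‖ ≤ T u t := by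
  intro u _ _ t htb
  have hΓα : 0 < Real.Gamma α := Real.Gamma_pos_of_pos (by linarith)
  have hΓ3 : 0 < Real.Gamma (3 - α) := Real.Gamma_pos_of_pos (by linarith)
  have hp0 : (0:ℝ) < α - 1 := by linarith
  have hβK : β * Real.Gamma α < (1 - η) ^ (α - 1) :=
    (lt_div_iff₀ hΓα).mp (lt_min_iff.mp hβ).1
  have hβγ : β < (1 - η) * Real.Gamma (3 - α) := (lt_min_iff.mp hβ).2
  have hbγ : b < η + β / Real.Gamma (3 - α) := (lt_min_iff.mp hbt).2
  set m : ℝ := β - (b - η) ^ (α - 1) / Real.Gamma α with hm_def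
  set Kb : ℝ := max (β + η ^ (α - 1) / Real.Gamma α)
    ((1 - η) ^ (α - 1) / Real.Gamma α - β) with hKb_def
  set gb : ℝ := β / Real.Gamma (3 - α) + η - b with hgb_def
  set G : ℝ := max (β / Real.Gamma (3 - α) + η)
    (1 - η - β / Real.Gamma (3 - α)) with hG_def
  have hηp : (0:ℝ) ≤ η ^ (α - 1) := Real.rpow_nonneg hη0.le _
  have hm0 : 0 < m := by
    have h : (b - η) ^ (α - 1) / Real.Gamma α < β := (div_lt_iff₀ hΓα).mpr hbβ
    rw [hm_def]; linarith
  have hKb0 : 0 < Kb :=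
    lt_of_lt_of_le (add_pos_of_pos_of_nonneg hβ0 (div_nonneg hηp hΓα.le)) (le_max_left _ _)
  have hgb0 : 0 < gb := by rw [hgb_def]; linarith
  have hG0 : 0 < G :=
    lt_of_lt_of_le (add_pos (div_pos hβ0 hΓ3) hη0) (le_max_left _ _)
  have hσ1 : σ₃ ≤ 1 := by
    rw [hσ₃]; exact (min_le_right _ _).trans (min_le_right _ _)
  -- positivity of σ₃
  have hnγ : 0 < β + (η - b) * Real.Gamma (3 - α) := by
    have e : β + (η - b) * Real.Gamma (3 - α) = gb * Real.Gamma (3 - α) := by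
      rw [hgb_def]; field_simp; ring
    rw [e]; exact mul_pos hgb0 hΓ3
  have hdγ : 0 < max (β + η * Real.Gamma (3 - α)) ((1 - η) * Real.Gamma (3 - α) - β) :=
    lt_of_lt_of_le (add_pos hβ0 (mul_pos hη0 hΓ3)) (le_max_left _ _)
  have hnum : 0 < β * Real.Gamma α - (b - η) ^ (α - 1) := sub_pos.2 hbβ
  have hden1 : 0 < β * Real.Gamma α + η ^ (α - 1) :=
    add_pos_of_pos_of_nonneg (mul_pos hβ0 hΓα) hηp
  have hden2 : 0 < (1 - η) ^ (α - 1) - β * Real.Gamma α := sub_pos.2 hβK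
  have hσ0 : 0 < σ₃ := by
    rw [hσ₃]
    exact lt_min (div_pos hnγ hdγ)
      (lt_min (lt_min (div_pos hnum hden1) (div_pos hnum hden2)) one_pos)
  -- σ₃ * G ≤ gb
  have hσγ : σ₃ * G ≤ gb := by
    have hn : β + (η - b) * Real.Gamma (3 - α) = gb * Real.Gamma (3 - α) := by
      rw [hgb_def]; field_simp; ring
    have hd : max (β + η * Real.Gamma (3 - α)) ((1 - η) * Real.Gamma (3 - α) - β)
        = G * Real.Gamma (3 - α) := by
      have e1 : β + η * Real.Gamma (3 - α)
          = (β / Real.Gamma (3 - α) + η) * Real.Gamma (3 - α) := by field_simp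
      have e2 : (1 - η) * Real.Gamma (3 - α) - β
          = (1 - η - β / Real.Gamma (3 - α)) * Real.Gamma (3 - α) := by field_simp
      rw [hG_def, e1, e2, ← max_mul_of_nonneg _ _ hΓ3.le]
    have h1 : σ₃ ≤ gb * Real.Gamma (3 - α) / (G * Real.Gamma (3 - α)) := by
      rw [hσ₃, ← hn, ← hd]; exact min_le_left _ _
    have h2 : σ₃ * (G * Real.Gamma (3 - α)) ≤ gb * Real.Gamma (3 - α) :=
      (le_div_iff₀ (mul_pos hG0 hΓ3)).mp h1
    rw [← mul_assoc] at h2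
    exact le_of_mul_le_mul_right h2 hΓ3
  -- σ₃ * Kb ≤ m
  have hσK : σ₃ * Kb ≤ m := by
    have h1 : σ₃ ≤ (β * Real.Gamma α - (b - η) ^ (α - 1)) / (β * Real.Gamma α + η ^ (α - 1)) := by
      rw [hσ₃]; exact (min_le_right _ _).trans ((min_le_left _ _).trans (min_le_left _ _))
    have h2 : σ₃ ≤ (β * Real.Gamma α - (b - η) ^ (α - 1))
        / ((1 - η) ^ (α - 1) - β * Real.Gamma α) := by
      rw [hσ₃]; exact (min_le_right _ _).trans ((min_le_left _ _).trans (min_le_right _ _))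
    have e1 : σ₃ * (β * Real.Gamma α + η ^ (α - 1)) ≤ β * Real.Gamma α - (b - η) ^ (α - 1) :=
      (le_div_iff₀ hden1).mp h1
    have e2 : σ₃ * ((1 - η) ^ (α - 1) - β * Real.Gamma α)
        ≤ β * Real.Gamma α - (b - η) ^ (α - 1) := (le_div_iff₀ hden2).mp h2
    have eqm : m = (β * Real.Gamma α - (b - η) ^ (α - 1)) / Real.Gamma α := by
      rw [hm_def]; field_simp
    have eqa : β + η ^ (α - 1) / Real.Gamma α
        = (β * Real.Gamma α + η ^ (α - 1)) / Real.Gamma α := by field_simp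
    have eqb : (1 - η) ^ (α - 1) / Real.Gamma α - β
        = ((1 - η) ^ (α - 1) - β * Real.Gamma α) / Real.Gamma α := by field_simp
    rw [hKb_def, eqm, eqa, eqb, mul_max_of_nonneg _ _ hσ0.le]
    apply max_le
    · rw [← mul_div_assoc]
      exact div_le_div_of_nonneg_right e1 hΓα.le
    · rw [← mul_div_assoc]
      exact div_le_div_of_nonneg_right e2 hΓα.le
  -- the integrand
  set g : ℝ → ℝ := fun s => f s (Set.IccExtend zero_le_one u s) with hg_def
  have hext : Continuous (Set.IccExtend (zero_le_one (α := ℝ)) u) := u.continuous.Icc_extend'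
  have hgc : ContinuousOn g (Set.Icc (0:ℝ) 1) := by
    have h1 : ContinuousOn (fun s : ℝ => (s, Set.IccExtend zero_le_one u s))
        (Set.Icc (0:ℝ) 1) := (continuous_id.prodMk hext).continuousOn
    exact hf.comp h1 (fun x hx => ⟨hx, trivial⟩)
  have hgi : IntervalIntegrable g volume 0 1 := by
    apply ContinuousOn.intervalIntegrable
    rwa [Set.uIcc_of_le zero_le_one]
  have hg0 : ∀ s ∈ Set.Icc (0:ℝ) 1, 0 ≤ g s := fun s hs => hf0 s hs _
  set I : ℝ := ∫ s in (0:ℝ)..1, g s with hI_def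
  have hI0 : 0 ≤ I := intervalIntegral.integral_nonneg zero_le_one hg0
  -- measurability of the kernel
  have hKcont : ∀ c : ℝ, Continuous (fun y : ℝ => (c - y) ^ (α - 1) / Real.Gamma α) := fun c =>
    ((continuous_const.sub continuous_id).rpow_const (fun y => Or.inr hp0.le)).div_const _
  have hKm : ∀ x : ℝ, Measurable (fun s => Kker α η β x s) := by
    intro x
    unfold Kker
    exact (measurable_const.add ((hKcont η).measurable.indicator measurableSet_Icc)).sub
      ((hKcont x).measurable.indicator measurableSet_Icc)
  have hKabs : ∀ x s : ℝ, 0 ≤ x → x ≤ 1 → |Kker α η β x s| ≤ Kb := by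
    intro x s hx0 hx1
    rw [abs_le]
    constructor
    · have h := Kker_lower (β := β) hα1 hα2 hη0.le hη1.le x s hx1
      have h2 : (1 - η) ^ (α - 1) / Real.Gamma α - β ≤ Kb := by
        rw [hKb_def]; exact le_max_right _ _
      linarith
    · refine (Kker_upper hα1 hη0.le x s).trans ?_
      rw [hKb_def]; exact le_max_left _ _
  -- integrability of the product
  have hKg_int : ∀ x : ℝ, 0 ≤ x → x ≤ 1 →
      IntervalIntegrable (fun s => Kker α η β x s * g s) volume 0 1 := by
    intro x hx0 hx1
    rw [intervalIntegrable_iff_integrableOn_Ioc_of_le zero_le_one]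
    have hgI : IntegrableOn g (Set.Ioc (0:ℝ) 1) volume := by
      have h := hgi
      rwa [intervalIntegrable_iff_integrableOn_Ioc_of_le zero_le_one] at h
    refine Integrable.mono' (hgI.const_mul Kb)
      ((hKm x).aestronglyMeasurable.mul hgI.aestronglyMeasurable) ?_
    filter_upwards [ae_restrict_mem measurableSet_Ioc] with s hs
    have hgs : 0 ≤ g s := hg0 s ⟨hs.1.le, hs.2⟩
    rw [Real.norm_eq_abs, abs_mul, abs_of_nonneg hgs]
    exact mul_le_mul_of_nonneg_right (hKabs x s hx0 hx1) hgs
  -- integral comparisons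
  have hint_low : ∀ x : ℝ, 0 ≤ x → x ≤ b → x ≤ 1 →
      m * I ≤ ∫ s in (0:ℝ)..1, Kker α η β x s * g s := by
    intro x hx0 hxb hx1
    rw [hI_def, ← intervalIntegral.integral_const_mul]
    apply intervalIntegral.integral_mono_on zero_le_one (hgi.const_mul m) (hKg_int x hx0 hx1)
    intro s hs
    have h := Kker_lower (β := β) hα1 hα2 hη0.le hbη x s hxb
    rw [← hm_def] at h
    exact mul_le_mul_of_nonneg_right h (hg0 s hs)
  have hint_up : ∀ x : ℝ, 0 ≤ x → x ≤ 1 →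
      (∫ s in (0:ℝ)..1, Kker α η β x s * g s) ≤ Kb * I := by
    intro x hx0 hx1
    have h1 : (∫ s in (0:ℝ)..1, Kker α η β x s * g s) ≤ ∫ s in (0:ℝ)..1, Kb * g s := by
      apply intervalIntegral.integral_mono_on zero_le_one (hKg_int x hx0 hx1) (hgi.const_mul Kb)
      intro s hs
      exact mul_le_mul_of_nonneg_right
        ((le_abs_self _).trans (hKabs x s hx0 hx1)) (hg0 s hs)
    rwa [intervalIntegral.integral_const_mul, ← hI_def] at h1
  have hint_lowKb : ∀ x : ℝ, 0 ≤ x → x ≤ 1 →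
      -(Kb * I) ≤ ∫ s in (0:ℝ)..1, Kker α η β x s * g s := by
    intro x hx0 hx1
    have h1 : (∫ s in (0:ℝ)..1, (-Kb) * g s) ≤ ∫ s in (0:ℝ)..1, Kker α η β x s * g s := by
      apply intervalIntegral.integral_mono_on zero_le_one (hgi.const_mul (-Kb)) (hKg_int x hx0 hx1)
      intro s hs
      exact mul_le_mul_of_nonneg_right ((abs_le.mp (hKabs x s hx0 hx1)).1) (hg0 s hs)
    rwa [intervalIntegral.integral_const_mul, ← hI_def, neg_mul] at h1
  set A : ℝ := H₁ u with hA_def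
  set B : ℝ := H₂ u with hB_def
  have hA0 : 0 ≤ A := hH₁0 u
  have hB0 : 0 ≤ B := hH₂0 u
  have hR0 : 0 ≤ A * G + B + Kb * I :=
    add_nonneg (add_nonneg (mul_nonneg hA0 hG0.le) hB0) (mul_nonneg hKb0.le hI0)
  have hTnorm : ‖T u‖ ≤ A * G + B + Kb * I := by
    rw [ContinuousMap.norm_le _ hR0]
    intro x
    rw [hT u x, ← hA_def, ← hB_def, Real.norm_eq_abs, abs_le]
    have hx0 : (0:ℝ) ≤ x := x.2.1
    have hx1 : (x:ℝ) ≤ 1 := x.2.2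
    have hγ1 : gam α η β (x:ℝ) ≤ G := by
      have h1 : β / Real.Gamma (3 - α) + η ≤ G := by rw [hG_def]; exact le_max_left _ _
      unfold gam; linarith
    have hγ2 : -G ≤ gam α η β (x:ℝ) := by
      have h1 : 1 - η - β / Real.Gamma (3 - α) ≤ G := by rw [hG_def]; exact le_max_right _ _
      unfold gam; linarith
    have hiu := hint_up x hx0 hx1
    have hil := hint_lowKb x hx0 hx1
    constructor
    · have e1 : A * -G ≤ A * gam α η β (x:ℝ) := mul_le_mul_of_nonneg_left hγ2 hA0
      have e2 : A * -G = -(A * G) := by ring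
      linarith
    · have e1 : A * gam α η β (x:ℝ) ≤ A * G := mul_le_mul_of_nonneg_left hγ1 hA0
      linarith
  have htv0 : (0:ℝ) ≤ t := t.2.1
  have htv1 : (t:ℝ) ≤ 1 := t.2.2
  have hTt : A * gb + B + m * I ≤ T u t := by
    rw [hT u t, ← hA_def, ← hB_def]
    have hγb : gb ≤ gam α η β (t:ℝ) := by rw [hgb_def]; unfold gam; linarith
    have e1 : A * gb ≤ A * gam α η β (t:ℝ) := mul_le_mul_of_nonneg_left hγb hA0
    have e2 := hint_low (t:ℝ) htv0 htb htv1
    linarith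
  have hfin : σ₃ * (A * G + B + Kb * I) ≤ A * gb + B + m * I := by
    have e1 : A * (σ₃ * G) ≤ A * gb := mul_le_mul_of_nonneg_left hσγ hA0
    have e2 : σ₃ * B ≤ B := mul_le_of_le_one_left hB0 hσ1
    have e3 : σ₃ * Kb * I ≤ m * I := mul_le_mul_of_nonneg_right hσK hI0
    have e4 : σ₃ * (A * G + B + Kb * I) = A * (σ₃ * G) + σ₃ * B + σ₃ * Kb * I := by ring
    linarith
  calc σ₃ * ‖T u‖ ≤ σ₃ * (A * G + B + Kb * I) := mul_le_mul_of_nonneg_left hTnorm hσ0.le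
    _ ≤ A * gb + B + m * I := hfin
    _ ≤ T u t := hTt
end
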